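/- arXiv:2605.28460 — 3 statements merged into one kernel-verified Lean document; each statement's English description precedes it below -/
import Mathlib

section
/- Let E be an elliptic curve over F with identity ∞, and D = Σ n_p·p a divisor with support in E(F). Then D is linearly equivalent to (Σ⁽⊕⁾ D) + (deg(D) − 1)·∞. -/
open WeierstrassCurve.Affine

variable {F : Type*} [Field F] {W : WeierstrassCurve F} [W.IsElliptic]

/-- A divisor on `E` with support in `E(F)`: a finite formal `ℤ`-linear combination of
`F`-points; the identity `0` of the point group is the point at infinity `∞`. -/
abbrev DivisorOn (W : WeierstrassCurve F) [W.IsElliptic] := W.toAffine.Point →₀ ℤ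

/-- The degree of a divisor: the sum of its coefficients. -/
noncomputable def degDiv (D : DivisorOn W) : ℤ := D.sum fun _ n => n

open Classical in
/-- The group-law sum `Σ⁽⊕⁾ D` of a divisor, computed in the group `E(F)`. -/
noncomputable def gsumDiv (D : DivisorOn W) : W.toAffine.Point := D.sum fun p n => n • p

open Classical in
/-- `D` is a principal divisor, i.e. `D = div f` for a nonzero rational function `f` on `E`;
encoded through the class group of the affine coordinate ring `F[W]` (invertible fractional
ideals modulo principal ones): `D` is principal iff `deg D = 0` and the class of
`∏ₚ Iₚ^{nₚ}` is trivial, where `[Iₚ] = Point.toClass p`. -/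
noncomputable def IsPrincipalDivisor (D : DivisorOn W) : Prop :=
  degDiv D = 0 ∧ D.sum (fun p n => n • WeierstrassCurve.Affine.Point.toClass p) = 0

/-- Linear equivalence of divisors: `D₁ ∼ D₂` iff `D₁ - D₂` is the divisor of a rational
function. -/
noncomputable def LinearlyEquivalentDiv (D₁ D₂ : DivisorOn W) : Prop :=
  IsPrincipalDivisor (D₁ - D₂)

/-- **Abel's theorem, divisor-class form.**  Every divisor `D = Σ nₚ·p` with
support in `E(F)` is linearly equivalent to `(Σ⁽⊕⁾ D) + (deg D − 1)·∞`. -/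
theorem linearlyEquivalent_gsum_add_deg_sub_one_smul_infty (D : DivisorOn W) :
    LinearlyEquivalentDiv D
      (Finsupp.single (gsumDiv D) 1 + Finsupp.single (0 : W.toAffine.Point) (degDiv D - 1)) := by
  classical
  constructor
  · show ((D - _).sum fun _ n => n) = 0
    rw [Finsupp.sum_sub_index (fun _ _ _ => rfl),
      Finsupp.sum_add_index' (fun _ => rfl) (fun _ _ _ => rfl),
      Finsupp.sum_single_index rfl, Finsupp.sum_single_index rfl]
    show degDiv D - (1 + (degDiv D - 1)) = 0
    ring
  · rw [Finsupp.sum_sub_index (fun p n₁ n₂ => sub_smul n₁ n₂ _),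
      Finsupp.sum_add_index' (fun p => by rw [zero_smul]) (fun p n₁ n₂ => by rw [add_smul]),
      Finsupp.sum_single_index (by rw [zero_smul]), Finsupp.sum_single_index (by rw [zero_smul]),
      one_smul, WeierstrassCurve.Affine.Point.toClass_zero, smul_zero, add_zero]
    have : WeierstrassCurve.Affine.Point.toClass (gsumDiv D)
        = D.sum fun p n => n • WeierstrassCurve.Affine.Point.toClass p := by
      rw [gsumDiv, map_finsuppSum]
      exact Finsupp.sum_congr fun p _ => map_zsmul _ _ _
    rw [this, sub_self]
end

section
/- Let E be an elliptic curve over a field F, ∞ its identity, and r ≥ 1 an integer. Let S = {q₁, …, q_r} ⊆ E(F)\{∞} be r distinct points with q₁ ⊕ ⋯ ⊕ q_r ≠ ∞. Then the evaluation map from the Riemann–Roch space H⁰(E, O_E(r·∞)) to Fʳ sending f to (f(q₁), …, f(q_r)) is an isomorphism of F-vector spaces. -/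
open Polynomial WeierstrassCurve.Affine
open scoped Polynomial.Bivariate nonZeroDivisors

variable {F : Type*} [Field F] (W : WeierstrassCurve.Affine F)

/-- The coordinate function `x` in the coordinate ring `F[W]` of the Weierstrass curve. -/
noncomputable def xElt : W.CoordinateRing := CoordinateRing.mk W (C X)

/-- The coordinate function `y` in the coordinate ring `F[W]`. -/
noncomputable def yElt : W.CoordinateRing := CoordinateRing.mk W Y

/-- The Riemann–Roch space `H⁰(E, O_E(r·∞))` of rational functions on `E` whose only pole
is at `∞` of order at most `r`: it is the `F`-span of the monomials `xⁱyʲ` with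
`2i + 3j ≤ r`, `j ≤ 1` (of pole order `2i + 3j` at `∞`). -/
noncomputable def RRSpaceInfty (r : ℕ) : Submodule F W.CoordinateRing :=
  Submodule.span F {f | ∃ i j : ℕ, 2 * i + 3 * j ≤ r ∧ j ≤ 1 ∧ f = xElt W ^ i * yElt W ^ j}

/-- Evaluation of a function in the coordinate ring at an affine point `(x, y)` of the
curve, via the canonical isomorphism `F[W] ⧸ ⟨X - x, Y - y⟩ ≃ F`. -/
noncomputable def evalAtPoint {x y : F} (h : W.Equation x y) : W.CoordinateRing →ₐ[F] F :=
  (CoordinateRing.quotientXYIdealEquiv (W' := W) (y := C y) h).toAlgHom.comp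
    (Ideal.Quotient.mkₐ F (CoordinateRing.XYIdeal W x (C y)))

/-! ### Auxiliary lemmas -/

lemma two_smul_add_le {a : WithBot ℕ} {n m k : ℕ} (h : a ≤ (n : WithBot ℕ)) (hk : 2 * n + k ≤ m) :
    2 • a + (k : WithBot ℕ) ≤ (m : WithBot ℕ) := by
  rw [Nat.cast_withBot] at h
  rw [Nat.cast_withBot, Nat.cast_withBot]
  induction a with
  | bot => rw [two_smul]; simp
  | coe a =>
    have ha : a ≤ n := WithBot.coe_le_coe.mp h
    rw [two_smul, ← WithBot.coe_add, ← WithBot.coe_add, WithBot.coe_le_coe]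
    omega

lemma two_smul_le {a : WithBot ℕ} {n m : ℕ} (h : a ≤ (n : WithBot ℕ)) (hk : 2 * n ≤ m) :
    2 • a ≤ (m : WithBot ℕ) := by
  rw [Nat.cast_withBot] at h
  rw [Nat.cast_withBot]
  induction a with
  | bot => rw [two_smul]; simp
  | coe a =>
    have ha : a ≤ n := WithBot.coe_le_coe.mp h
    rw [two_smul, ← WithBot.coe_add, WithBot.coe_le_coe]
    omega

/-- Product of pairwise coprime ideals equals their infimum. -/
lemma prod_ideal_eq_inf {R ι : Type*} [CommRing R] (s : Finset ι) (I : ι → Ideal R)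
    (hco : ∀ i ∈ s, ∀ j ∈ s, i ≠ j → IsCoprime (I i) (I j)) :
    ∏ i ∈ s, I i = s.inf I := by
  classical
  induction s using Finset.induction_on with
  | empty => simp [Ideal.one_eq_top]
  | insert _ _ ha ih =>
    rename_i a s
    rw [Finset.prod_insert ha, Finset.inf_insert,
      ih fun i hi j hj hij => hco i (Finset.mem_insert_of_mem hi) j (Finset.mem_insert_of_mem hj) hij]
    refine Ideal.mul_eq_inf_of_coprime (Ideal.isCoprime_iff_sup_eq.mp ?_)
    have hs : s.inf I = ∏ i ∈ s, I i :=
      (ih fun i hi j hj hij =>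
        hco i (Finset.mem_insert_of_mem hi) j (Finset.mem_insert_of_mem hj) hij).symm
    rw [hs]
    exact IsCoprime.prod_right fun i hi =>
      hco a (Finset.mem_insert_self a s) i (Finset.mem_insert_of_mem hi)
        (fun hai => ha (hai ▸ hi))

lemma evalAtPoint_eq_zero_iff {x y : F} (h : W.Equation x y) (g : W.CoordinateRing) :
    evalAtPoint W h g = 0 ↔ g ∈ CoordinateRing.XYIdeal W x (C y) := by
  simp only [evalAtPoint, AlgHom.comp_apply, AlgEquiv.toAlgHom_eq_coe, AlgHom.coe_coe]
  exact (map_eq_zero_iff _ (AlgEquiv.injective _)).trans Ideal.Quotient.eq_zero_iff_mem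

lemma algebraMap_CR (c : F) : algebraMap F W.CoordinateRing c = CoordinateRing.mk W (C (C c)) := rfl

lemma evalAtPoint_xElt {x y : F} (h : W.Equation x y) : evalAtPoint W h (xElt W) = x := by
  have hx : evalAtPoint W h (CoordinateRing.XClass W x) = 0 :=
    (evalAtPoint_eq_zero_iff W h _).mpr (Ideal.subset_span (Set.mem_insert _ _))
  have hrw : xElt W = CoordinateRing.XClass W x + algebraMap F W.CoordinateRing x := by
    rw [algebraMap_CR, CoordinateRing.XClass, xElt, ← map_add, ← C_add, sub_add_cancel]
  rw [hrw, map_add, hx, AlgHom.commutes, zero_add]; simp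

lemma evalAtPoint_yElt {x y : F} (h : W.Equation x y) : evalAtPoint W h (yElt W) = y := by
  have hy : evalAtPoint W h (CoordinateRing.YClass W (C y)) = 0 :=
    (evalAtPoint_eq_zero_iff W h _).mpr (Ideal.subset_span (Set.mem_insert_of_mem _ rfl))
  have hrw : yElt W = CoordinateRing.YClass W (C y) + algebraMap F W.CoordinateRing y := by
    rw [algebraMap_CR, CoordinateRing.YClass, yElt, ← map_add, sub_add_cancel]
  rw [hrw, map_add, hy, AlgHom.commutes, zero_add]; simp

lemma XYIdeal_maximal {x y : F} (h : W.Equation x y) :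
    (CoordinateRing.XYIdeal W x (C y)).IsMaximal :=
  Ideal.Quotient.maximal_of_isField _ <|
    (CoordinateRing.quotientXYIdealEquiv (W' := W) (y := C y) h).toMulEquiv.isField (Field.toIsField F)

lemma XYIdeal_injective {x₁ y₁ x₂ y₂ : F} (h₁ : W.Equation x₁ y₁) (h₂ : W.Equation x₂ y₂)
    (hIJ : CoordinateRing.XYIdeal W x₁ (C y₁) = CoordinateRing.XYIdeal W x₂ (C y₂)) :
    x₁ = x₂ ∧ y₁ = y₂ := by
  have hx : evalAtPoint W h₁ (xElt W) = x₂ := by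
    have h0 : evalAtPoint W h₁ (CoordinateRing.XClass W x₂) = 0 := by
      rw [evalAtPoint_eq_zero_iff, hIJ]; exact Ideal.subset_span (Set.mem_insert _ _)
    have hrw : xElt W = CoordinateRing.XClass W x₂ + algebraMap F W.CoordinateRing x₂ := by
      rw [algebraMap_CR, CoordinateRing.XClass, xElt, ← map_add, ← C_add, sub_add_cancel]
    rw [hrw, map_add, h0, AlgHom.commutes, zero_add]; simp
  have hy : evalAtPoint W h₁ (yElt W) = y₂ := by
    have h0 : evalAtPoint W h₁ (CoordinateRing.YClass W (C y₂)) = 0 := by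
      rw [evalAtPoint_eq_zero_iff, hIJ]; exact Ideal.subset_span (Set.mem_insert_of_mem _ rfl)
    have hrw : yElt W = CoordinateRing.YClass W (C y₂) + algebraMap F W.CoordinateRing y₂ := by
      rw [algebraMap_CR, CoordinateRing.YClass, yElt, ← map_add, sub_add_cancel]
    rw [hrw, map_add, h0, AlgHom.commutes, zero_add]; simp
  rw [evalAtPoint_xElt W h₁] at hx
  rw [evalAtPoint_yElt W h₁] at hy
  exact ⟨hx, hy⟩

/-! ### Degree bounds for elements of the Riemann–Roch space -/

/-- `(p, q) ↦ p • 1 + q • y` as an `F`-linear map. -/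
noncomputable def pairToCR : (F[X] × F[X]) →ₗ[F] W.CoordinateRing where
  toFun pq := pq.1 • (1 : W.CoordinateRing) + pq.2 • CoordinateRing.mk W Y
  map_add' a b := by simp only [Prod.fst_add, Prod.snd_add, add_smul]; ring
  map_smul' c a := by
    simp only [Prod.smul_fst, Prod.smul_snd, RingHom.id_apply, smul_add, smul_assoc]

lemma xpow_smul_one (i : ℕ) : (X ^ i : F[X]) • (1 : W.CoordinateRing) = xElt W ^ i := by
  rw [CoordinateRing.smul, mul_one, xElt, ← map_pow, ← map_pow]

lemma xpow_smul_y (i : ℕ) :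
    (X ^ i : F[X]) • (CoordinateRing.mk W Y) = xElt W ^ i * yElt W := by
  rw [CoordinateRing.smul, xElt, yElt, ← map_pow, ← map_pow]

lemma exists_repr_of_mem_RRSpace {r : ℕ} {f : W.CoordinateRing} (hf : f ∈ RRSpaceInfty W r) :
    ∃ p q : F[X], f = p • (1 : W.CoordinateRing) + q • CoordinateRing.mk W Y ∧
      p.degree ≤ ((r / 2 : ℕ) : WithBot ℕ) ∧
      q.degree ≤ (if 3 ≤ r then (((r - 3) / 2 : ℕ) : WithBot ℕ) else ⊥) := by
  set d₂ : WithBot ℕ := if 3 ≤ r then (((r - 3) / 2 : ℕ) : WithBot ℕ) else ⊥ with hd₂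
  have hsub : RRSpaceInfty W r ≤
      Submodule.map (pairToCR W) ((Polynomial.degreeLE F ((r / 2 : ℕ) : WithBot ℕ)).prod
        (Polynomial.degreeLE F d₂)) := by
    rw [RRSpaceInfty, Submodule.span_le]
    rintro g ⟨i, j, hij, hj1, rfl⟩
    interval_cases j
    · refine ⟨(X ^ i, 0), ⟨?_, ?_⟩, ?_⟩
      · rw [SetLike.mem_coe, Polynomial.mem_degreeLE, degree_X_pow, Nat.cast_withBot,
          Nat.cast_withBot, WithBot.coe_le_coe]
        omega
      · rw [SetLike.mem_coe, Polynomial.mem_degreeLE]; simp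
      · show (X ^ i : F[X]) • (1 : W.CoordinateRing) + (0 : F[X]) • _ = _
        rw [zero_smul, add_zero, xpow_smul_one, pow_zero, mul_one]
    · refine ⟨(0, X ^ i), ⟨?_, ?_⟩, ?_⟩
      · rw [SetLike.mem_coe, Polynomial.mem_degreeLE]; simp
      · rw [SetLike.mem_coe, Polynomial.mem_degreeLE, degree_X_pow, hd₂, if_pos (by omega),
          Nat.cast_withBot, Nat.cast_withBot, WithBot.coe_le_coe]
        omega
      · show (0 : F[X]) • (1 : W.CoordinateRing) + (X ^ i : F[X]) • CoordinateRing.mk W Y = _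
        rw [zero_smul, zero_add, xpow_smul_y, pow_one]
  obtain ⟨⟨p, q⟩, ⟨hp, hq⟩, rfl⟩ := hsub hf
  exact ⟨p, q, rfl, Polynomial.mem_degreeLE.mp hp, Polynomial.mem_degreeLE.mp hq⟩

lemma norm_degree_le {r : ℕ} {f : W.CoordinateRing} (hf : f ∈ RRSpaceInfty W r) :
    (Algebra.norm F[X] f).natDegree ≤ r := by
  obtain ⟨p, q, rfl, hp, hq⟩ := exists_repr_of_mem_RRSpace W hf
  rw [natDegree_le_iff_degree_le, CoordinateRing.degree_norm_smul_basis, max_le_iff]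
  have h33 : ((3 : ℕ) : WithBot ℕ) = 3 := by norm_cast
  constructor
  · exact two_smul_le hp (by omega)
  · by_cases h3 : 3 ≤ r
    · rw [if_pos h3] at hq
      rw [← h33]
      exact two_smul_add_le hq (by omega)
    · rw [if_neg h3, le_bot_iff, degree_eq_bot] at hq
      rw [hq, degree_zero, two_smul]
      simp

/-! ### The dimension of the Riemann–Roch space -/

/-- The monomial basis `xⁱyʲ`, `j ≤ 1`, of the coordinate ring as an `F`-vector space. -/
noncomputable def fullBasis : Module.Basis (ℕ × Fin 2) F W.CoordinateRing :=
  (Polynomial.basisMonomials F).smulTower (CoordinateRing.basis W)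

lemma fullBasis_apply0 (i : ℕ) : fullBasis W (i, 0) = xElt W ^ i := by
  rw [fullBasis, Module.Basis.smulTower_apply]
  show (Polynomial.basisMonomials F) i • (CoordinateRing.basis W) 0 = _
  have hmon : (Polynomial.basisMonomials F) i = X ^ i := by
    rw [Polynomial.coe_basisMonomials, X_pow_eq_monomial]
  rw [hmon, CoordinateRing.basis_zero, xpow_smul_one]

lemma fullBasis_apply1 (i : ℕ) : fullBasis W (i, 1) = xElt W ^ i * yElt W := by
  rw [fullBasis, Module.Basis.smulTower_apply]
  show (Polynomial.basisMonomials F) i • (CoordinateRing.basis W) 1 = _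
  have hmon : (Polynomial.basisMonomials F) i = X ^ i := by
    rw [Polynomial.coe_basisMonomials, X_pow_eq_monomial]
  rw [hmon, CoordinateRing.basis_one, xpow_smul_y]

/-- The index set of the monomials of pole order at most `r`, as a finset. -/
noncomputable def idxSet (r : ℕ) : Finset (ℕ × Fin 2) :=
  ((Finset.range (r / 2 + 1)).image fun i => (i, (0 : Fin 2))) ∪
    ((Finset.range ((r - 1) / 2)).image fun i => (i, (1 : Fin 2)))

lemma card_idxSet {r : ℕ} (hr : 1 ≤ r) : (idxSet r).card = r := by
  have hdisj : Disjoint ((Finset.range (r / 2 + 1)).image fun i => (i, (0 : Fin 2)))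
      ((Finset.range ((r - 1) / 2)).image fun i => (i, (1 : Fin 2))) := by
    simp only [Finset.disjoint_left, Finset.mem_image, Finset.mem_range]
    rintro ⟨a, b⟩ ⟨c, _, hcab⟩ ⟨d, _, hdab⟩
    rw [← hcab] at hdab
    simp [Prod.ext_iff] at hdab
  rw [idxSet, Finset.card_union_of_disjoint hdisj, Finset.card_image_of_injective,
    Finset.card_image_of_injective, Finset.card_range, Finset.card_range]
  · omega
  · intro a b hab; simpa using hab
  · intro a b hab; simpa using hab

lemma coe_idxSet (r : ℕ) :
    (idxSet r : Set (ℕ × Fin 2)) = {p : ℕ × Fin 2 | 2 * p.1 + 3 * (p.2 : ℕ) ≤ r} := by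
  ext ⟨i, j⟩
  fin_cases j <;> simp [idxSet] <;> omega

lemma genSet_eq (r : ℕ) :
    {f | ∃ i j : ℕ, 2 * i + 3 * j ≤ r ∧ j ≤ 1 ∧ f = xElt W ^ i * yElt W ^ j} =
      fullBasis W '' (idxSet r : Set (ℕ × Fin 2)) := by
  rw [coe_idxSet]
  ext g
  constructor
  · rintro ⟨i, j, hle, hj, rfl⟩
    interval_cases j
    · exact ⟨(i, 0), by simpa using hle, by rw [fullBasis_apply0, pow_zero, mul_one]⟩
    · exact ⟨(i, 1), by simpa using hle, by rw [fullBasis_apply1, pow_one]⟩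
  · rintro ⟨⟨i, j⟩, hmem, rfl⟩
    rcases j with ⟨jv, hj⟩
    interval_cases jv
    · exact ⟨i, 0, by simpa using hmem, by norm_num,
        by rw [pow_zero, mul_one]; exact fullBasis_apply0 W i⟩
    · exact ⟨i, 1, by simpa using hmem, le_refl 1,
        by rw [pow_one]; exact fullBasis_apply1 W i⟩

lemma finrank_RRSpace {r : ℕ} (hr : 1 ≤ r) :
    Module.finrank F (RRSpaceInfty W r) = r := by
  classical
  rw [RRSpaceInfty, genSet_eq]
  have hli : LinearIndependent F
      (fun x : (fullBasis W '' (idxSet r : Set (ℕ × Fin 2))) => (x : W.CoordinateRing)) :=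
    LinearIndepOn.id_image ((fullBasis W).linearIndependent.comp _ Subtype.coe_injective)
  rw [finrank_span_set_eq_card hli, Set.toFinset_image,
    Finset.card_image_of_injective _ (fullBasis W).injective]
  simp [card_idxSet hr]

/-! ### Injectivity: Abel's theorem -/

open Classical in
lemma eval_zero_of_mem_RRSpace {r : ℕ} (x y : Fin r → F) (h : ∀ i, W.Nonsingular (x i) (y i))
    (hdist : Function.Injective fun i => (x i, y i))
    (hsum : ∑ i, WeierstrassCurve.Affine.Point.some _ _ (h i) ≠ 0)
    {f : W.CoordinateRing} (hf : f ∈ RRSpaceInfty W r)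
    (hev : ∀ i, evalAtPoint W (h i).1 f = 0) : f = 0 := by
  classical
  by_contra hf0
  set I : Fin r → Ideal W.CoordinateRing := fun i => CoordinateRing.XYIdeal W (x i) (C (y i))
    with hIdef
  have hmax : ∀ i, (I i).IsMaximal := fun i => XYIdeal_maximal W (h i).1
  have hne : ∀ i j, i ≠ j → I i ≠ I j := by
    intro i j hij hIJ
    obtain ⟨hx, hy⟩ := XYIdeal_injective W (h i).1 (h j).1 hIJ
    exact hij (hdist (by simp [hx, hy]))
  have hcop : Pairwise (Function.onFun IsCoprime I) := fun i j hij =>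
    Ideal.isCoprime_iff_sup_eq.mpr ((hmax i).coprime_of_ne (hmax j) (hne i j hij))
  have hfI : ∀ i, f ∈ I i := fun i => (evalAtPoint_eq_zero_iff W (h i).1 f).mp (hev i)
  have hspan0 : Ideal.span ({f} : Set W.CoordinateRing) ≠ ⊥ := by
    simpa [Ideal.span_singleton_eq_bot] using hf0
  haveI : FiniteDimensional F (W.CoordinateRing ⧸ Ideal.span ({f} : Set W.CoordinateRing)) :=
    LinearEquiv.finiteDimensional
      ((Ideal.quotientEquivDirectSum F (CoordinateRing.basis W) hspan0).trans
        (DirectSum.linearEquivFunOnFintype F _ _)).symm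
  have hdim : Module.finrank F (W.CoordinateRing ⧸ Ideal.span ({f} : Set W.CoordinateRing)) ≤ r := by
    rw [finrank_quotient_span_eq_natDegree_norm (CoordinateRing.basis W) hf0]
    exact norm_degree_le W hf
  -- the evaluation map from the quotient by `span {f}` to `F^r`
  set Ψ : W.CoordinateRing →ₐ[F] (Fin r → F) := Pi.algHom _ _ (fun i => evalAtPoint W (h i).1)
    with hΨdef
  have hΨI : ∀ g ∈ Ideal.span ({f} : Set W.CoordinateRing), Ψ g = 0 := by
    intro g hg
    obtain ⟨c, rfl⟩ := Ideal.mem_span_singleton'.mp hg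
    funext i
    show evalAtPoint W (h i).1 (c * f) = 0
    rw [map_mul, hev i, mul_zero]
  set φ := Ideal.Quotient.liftₐ _ Ψ hΨI with hφdef
  have hφmk : ∀ g, φ (Ideal.Quotient.mk _ g) = Ψ g := fun g => rfl
  have hsurj : Function.Surjective φ := by
    intro v
    obtain ⟨g, hg⟩ := Ideal.pi_quotient_surjective hcop
      (fun i => (CoordinateRing.quotientXYIdealEquiv (W' := W) (y := C (y i)) (h i).1).symm (v i))
    refine ⟨Ideal.Quotient.mk _ g, ?_⟩
    funext i
    rw [hφmk]
    show evalAtPoint W (h i).1 g = v i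
    have : evalAtPoint W (h i).1 g =
        (CoordinateRing.quotientXYIdealEquiv (W' := W) (y := C (y i)) (h i).1)
          (Ideal.Quotient.mk (I i) g) := rfl
    rw [this, hg i, AlgEquiv.apply_symm_apply]
  have hker : LinearMap.ker φ.toLinearMap = ⊥ := by
    have hsurj' : Function.Surjective φ.toLinearMap := hsurj
    have h1 := LinearMap.finrank_range_add_finrank_ker φ.toLinearMap
    rw [LinearMap.range_eq_top.mpr hsurj', finrank_top, Module.finrank_fin_fun] at h1
    exact Submodule.finrank_eq_zero.mp (by omega)
  have hspan_eq : Ideal.span ({f} : Set W.CoordinateRing) = ⨅ i, I i := by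
    apply le_antisymm
    · rw [Ideal.span_le, Set.singleton_subset_iff]
      exact Submodule.mem_iInf _ |>.mpr hfI
    · intro g hg
      have hg0 : φ (Ideal.Quotient.mk _ g) = 0 := by
        rw [hφmk]
        funext i
        show evalAtPoint W (h i).1 g = 0
        exact (evalAtPoint_eq_zero_iff W (h i).1 g).mpr ((Submodule.mem_iInf _).mp hg i)
      have : Ideal.Quotient.mk (Ideal.span ({f} : Set W.CoordinateRing)) g = 0 := by
        have := LinearMap.ker_eq_bot.mp hker
        exact this (by simpa using hg0)
      exact Ideal.Quotient.eq_zero_iff_mem.mp this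
  have hprod : ∏ i, I i = Ideal.span ({f} : Set W.CoordinateRing) := by
    rw [prod_ideal_eq_inf _ _ (fun i _ j _ hij => hcop hij), hspan_eq]
    simp [Finset.inf_eq_iInf]
  -- contradiction via the class group
  apply hsum
  rw [← WeierstrassCurve.Affine.Point.toClass_eq_zero, map_sum]
  have hterm : ∀ i : Fin r,
      WeierstrassCurve.Affine.Point.toClass (WeierstrassCurve.Affine.Point.some _ _ (h i)) =
        Additive.ofMul (ClassGroup.mk W.FunctionField (CoordinateRing.XYIdeal' (W := W) (h i))) := fun i =>
    WeierstrassCurve.Affine.Point.toClass_some (h i)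
  rw [Finset.sum_congr rfl fun i _ => hterm i, ← ofMul_prod, ← map_prod]
  have hcoe : ((↑(∏ i, CoordinateRing.XYIdeal' (h i)) :
      FractionalIdeal W.CoordinateRing⁰ W.FunctionField)) = ((∏ i, I i : Ideal W.CoordinateRing) :
        FractionalIdeal W.CoordinateRing⁰ W.FunctionField) :=
    calc (↑(∏ i, CoordinateRing.XYIdeal' (h i)) :
          FractionalIdeal W.CoordinateRing⁰ W.FunctionField)
        = ∏ i, ((CoordinateRing.XYIdeal' (h i) : Units _) :
            FractionalIdeal W.CoordinateRing⁰ W.FunctionField) :=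
          map_prod (Units.coeHom _) _ _
      _ = ∏ i, ((I i : Ideal W.CoordinateRing) :
            FractionalIdeal W.CoordinateRing⁰ W.FunctionField) :=
          Finset.prod_congr rfl fun i _ => CoordinateRing.XYIdeal'_eq (h i)
      _ = ((∏ i, I i : Ideal W.CoordinateRing) :
            FractionalIdeal W.CoordinateRing⁰ W.FunctionField) :=
          (map_prod (FractionalIdeal.coeIdealHom W.CoordinateRing⁰ W.FunctionField) I Finset.univ).symm
  have hone : ClassGroup.mk W.FunctionField (∏ i, CoordinateRing.XYIdeal' (h i)) = 1 :=
    (ClassGroup.mk_eq_one_of_coe_ideal <| by exact hcoe).mpr ⟨f, hf0, hprod⟩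
  rw [hone]
  rfl

open Classical in
/-- Let `E` be an elliptic curve over `F` with identity `∞` and `r ≥ 1`.
Let `q₁, …, q_r` be `r` distinct affine points in `E(F) \ {∞}` with
`q₁ ⊕ ⋯ ⊕ q_r ≠ ∞`.  Then the evaluation map `H⁰(E, O_E(r·∞)) → Fʳ`,
`f ↦ (f(q₁), …, f(q_r))`, is an isomorphism of `F`-vector spaces (it is visibly `F`-linear,
and we assert bijectivity). -/
theorem evaluation_map_bijective [W.IsElliptic] (r : ℕ) (hr : 1 ≤ r)
    (x y : Fin r → F) (h : ∀ i, W.Nonsingular (x i) (y i))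
    (hdist : Function.Injective fun i => (x i, y i))
    (hsum : ∑ i, WeierstrassCurve.Affine.Point.some _ _ (h i) ≠ 0) :
    Function.Bijective fun f : RRSpaceInfty W r =>
      fun i : Fin r => evalAtPoint W (h i).1 (f : W.CoordinateRing) := by
  classical
  set L : RRSpaceInfty W r →ₗ[F] (Fin r → F) :=
    { toFun := fun f => fun i => evalAtPoint W (h i).1 (f : W.CoordinateRing),
      map_add' := by intros a b; funext i; simp,
      map_smul' := by intros c a; funext i; simp } with hL
  have hinj : Function.Injective L := by
    rw [← LinearMap.ker_eq_bot]
    refine (Submodule.eq_bot_iff _).mpr fun f hf => ?_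
    have h0 : (f : W.CoordinateRing) = 0 :=
      eval_zero_of_mem_RRSpace W x y h hdist hsum f.2
        (fun i => congrFun (LinearMap.mem_ker.mp hf) i)
    exact Subtype.ext h0
  haveI : FiniteDimensional F (RRSpaceInfty W r) := by
    have hEq : RRSpaceInfty W r =
        Submodule.span F (fullBasis W '' (idxSet r : Set (ℕ × Fin 2))) := by
      rw [RRSpaceInfty, genSet_eq]
    rw [hEq]
    exact FiniteDimensional.span_of_finite F ((Set.toFinite _).image _)
  have hsurj : Function.Surjective L :=
    (LinearMap.injective_iff_surjective_of_finrank_eq_finrank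
      (by rw [finrank_RRSpace W hr, Module.finrank_fin_fun])).mp hinj
  exact ⟨hinj, hsurj⟩
end

section
/- Let A be an integral domain with an action of a finite group G by ring automorphisms. Then Frac(A^G) = (Frac A)^G, where A^G is the subring of G-invariants and (Frac A)^G the subfield of G-invariant fractions. -/
/-- Let `A` be an integral domain with an action of a finite group `G`
by ring automorphisms, extended compatibly to the fraction field `Frac A`.  Then
`Frac(A^G) = (Frac A)^G`: an element of `Frac A` is `G`-invariant if and only if it can be
written as a fraction of two `G`-invariant elements of `A`. -/
theorem fractionRing_invariants (A : Type*) [CommRing A] [IsDomain A]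
    (G : Type*) [Group G] [Finite G] [MulSemiringAction G A]
    [MulSemiringAction G (FractionRing A)]
    (hcomp : ∀ (g : G) (a : A),
      g • (algebraMap A (FractionRing A) a) = algebraMap A (FractionRing A) (g • a)) :
    ∀ x : FractionRing A, (∀ g : G, g • x = x) ↔
      ∃ a b : A, (∀ g : G, g • a = a) ∧ (∀ g : G, g • b = b) ∧ b ≠ 0 ∧
        x = algebraMap A (FractionRing A) a / algebraMap A (FractionRing A) b := by
  classical
  cases nonempty_fintype G
  set f := algebraMap A (FractionRing A) with hf
  have hinj : Function.Injective f := IsFractionRing.injective A (FractionRing A)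
  intro x
  constructor
  · intro hx
    obtain ⟨a, b, hb, hxe⟩ := IsFractionRing.div_surjective (A := A) x
    have hb0 : b ≠ 0 := nonZeroDivisors.ne_zero hb
    have hsm : ∀ g : G, g • b ≠ 0 := by
      intro g h
      apply hb0
      have := congrArg (fun y => g⁻¹ • y) h
      simpa using this
    set c : A := ∏ g ∈ Finset.univ.erase (1 : G), g • b with hc
    set b' : A := ∏ g : G, g • b with hb'
    have hbb' : b' = b * c := by
      rw [hb', hc, ← Finset.mul_prod_erase Finset.univ _ (Finset.mem_univ 1), one_smul]
    have hb'0 : b' ≠ 0 := by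
      rw [hb']
      exact Finset.prod_ne_zero_iff.mpr fun g _ => hsm g
    have hfb'0 : f b' ≠ 0 := fun h => hb'0 (hinj (by simpa using h))
    have hb'inv : ∀ g : G, g • b' = b' := by
      intro σ
      have h1 : σ • b' = ∏ g : G, (σ * g) • b := by
        show MulSemiringAction.toRingHom G A σ b' = _
        rw [hb', map_prod]
        exact Finset.prod_congr rfl fun g _ => (mul_smul σ g b).symm
      rw [h1, hb']
      exact Fintype.prod_equiv (Equiv.mulLeft σ) _ _ (fun g => rfl)
    have key : f (a * c) = x * f b' := by
      have hfb0 : f b ≠ 0 := fun h => hb0 (hinj (by simpa using h))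
      rw [hbb', map_mul, map_mul, ← hxe]
      field_simp
      rw [← hf, mul_div_assoc, div_self hfb0]
      ring
    have hainv : ∀ g : G, g • (a * c) = a * c := by
      intro g
      apply hinj
      rw [← hcomp, key, smul_mul', hx g, hcomp, hb'inv g]
    exact ⟨a * c, b', hainv, hb'inv, hb'0, by rw [key]; field_simp⟩
  · rintro ⟨a, b, ha, hb, hb0, rfl⟩
    intro g
    have hfb0 : f b ≠ 0 := fun h => hb0 (hinj (by simpa using h))
    have : g • (f a / f b * f b) = f a := by rw [div_mul_cancel₀ _ hfb0, hcomp, ha]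
    rw [smul_mul', hcomp, hb] at this
    field_simp at this ⊢
    rw [this]
end
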